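/- The chain of strict inequalities 5/6 < G_n(−1) < H_n(−1) < 1 < H_n(1) < G_n(1) < 2 holds. -/

import Mathlib

open Real

noncomputable def A (m : ℕ) : ℝ := (Nat.centralBinom m : ℝ) / 4 ^ m

noncomputable def c (n m : ℕ) : ℝ := A m / (2 * m * n + 1)

noncomputable def d (n m : ℕ) : ℝ := A m * ((n : ℝ) - 1) / ((n : ℝ) * (2 * m + 1) - 1)

noncomputable def H (n : ℕ) (z : ℂ) : ℂ := ∑' m : ℕ, (c n m : ℂ) * z ^ m

noncomputable def G (n : ℕ) (z : ℂ) : ℂ := ∑' m : ℕ, (d n m : ℂ) * z ^ m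

noncomputable def hh (n : ℕ) (z : ℂ) : ℂ := ∑' m : ℕ, (c n m : ℂ) * z ^ (2 * m * n + 1)

noncomputable def gg (n : ℕ) (z : ℂ) : ℂ :=
  (1 / ((n : ℂ) - 1)) * ∑' m : ℕ, (d n m : ℂ) * z ^ (2 * m * n + n - 1)

noncomputable def f (n : ℕ) (β : ℝ) (z : ℂ) : ℂ :=
  Complex.exp (Complex.I * β / 2) * hh n z +
    Complex.exp (-(Complex.I * β / 2)) * (starRingEnd ℂ) (gg n z)

noncomputable def K (n : ℕ) : ℝ :=
  Real.sqrt π * Real.Gamma (1 + 1 / (2 * n)) / Real.Gamma (1 / 2 + 1 / (2 * n))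

/-! ### Auxiliary facts about `A` -/

lemma A_pos (m : ℕ) : 0 < A m :=
  div_pos (by exact_mod_cast m.centralBinom_pos) (by positivity)

lemma A_zero : A 0 = 1 := by simp [A, Nat.centralBinom_zero]

lemma A_one : A 1 = 1/2 := by
  have : Nat.centralBinom 1 = 2 := by decide
  rw [A, this]; norm_num

lemma A_two : A 2 = 3/8 := by
  have : Nat.centralBinom 2 = 6 := by decide
  rw [A, this]; norm_num

lemma A_succ_mul (m : ℕ) : A (m+1) * (2*(m:ℝ)+2) = A m * (2*(m:ℝ)+1) := by
  have h' : ((m:ℝ)+1) * (Nat.centralBinom (m+1) : ℝ)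
      = 2 * (2*(m:ℝ)+1) * (Nat.centralBinom m : ℝ) := by
    exact_mod_cast Nat.succ_mul_centralBinom_succ m
  have h4 : (0:ℝ) < 4 ^ m := by positivity
  rw [A, A, pow_succ]
  field_simp
  nlinarith [h']

lemma A_succ_lt (m : ℕ) : A (m+1) < A m := by
  have h := A_succ_mul m
  have h2 : (0:ℝ) < 2*(m:ℝ)+2 := by positivity
  nlinarith [A_pos m, A_pos (m+1)]

lemma A_tele (m : ℕ) : A m - A (m+1) = A m / (2*(m:ℝ)+2) := by
  have h := A_succ_mul m
  rw [eq_div_iff (by positivity : (2*(m:ℝ)+2) ≠ 0)]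
  linear_combination -h

lemma tele_nonneg (m : ℕ) : 0 ≤ A m - A (m+1) := by linarith [A_succ_lt m]

lemma tele_sum_range (N : ℕ) : ∑ i ∈ Finset.range N, (A i - A (i+1)) ≤ 1 := by
  rw [Finset.sum_range_sub' A N, A_zero]
  linarith [A_pos N]

lemma tele_summable : Summable (fun m => A m - A (m+1)) :=
  summable_of_sum_range_le tele_nonneg tele_sum_range

lemma tele_tsum_le : ∑' m, (A m - A (m+1)) ≤ 1 :=
  Real.tsum_le_of_sum_range_le tele_nonneg tele_sum_range

/-! ### Alternating series estimates -/

lemma alt_summable (a : ℕ → ℝ) (hs : Summable a) (h0 : ∀ m, 0 ≤ a m) :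
    Summable (fun m => a m * (-1:ℝ)^m) := by
  apply Summable.of_abs
  have : (fun m => |a m * (-1:ℝ)^m|) = a := by
    funext m
    rw [abs_mul, abs_pow, abs_neg, abs_one, one_pow, mul_one, abs_of_nonneg (h0 m)]
  rwa [this]

lemma alt_lower (a : ℕ → ℝ) (hs : Summable a) (h0 : ∀ m, 0 ≤ a m)
    (ha : ∀ m, a (m+1) ≤ a m) : a 0 - a 1 ≤ ∑' m, a m * (-1:ℝ)^m := by
  have hse : Summable (fun k => a (2*k)) :=
    hs.comp_injective (fun x y h => by omega)
  have hso : Summable (fun k => a (2*k+1)) :=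
    hs.comp_injective (fun x y h => by omega)
  have he : (fun k => a (2*k) * (-1:ℝ)^(2*k)) = fun k => a (2*k) := by
    funext k; rw [pow_mul]; norm_num
  have ho : (fun k => a (2*k+1) * (-1:ℝ)^(2*k+1)) = fun k => -a (2*k+1) := by
    funext k; rw [pow_succ, pow_mul]; norm_num
  have key := tsum_even_add_odd (f := fun m => a m * (-1:ℝ)^m)
    (by rw [he]; exact hse) (by rw [ho]; exact hso.neg)
  rw [← key]
  have h1 : ∑' k, a (2*k) * (-1:ℝ)^(2*k) = ∑' k, a (2*k) := by rw [he]
  have h2 : ∑' k, a (2*k+1) * (-1:ℝ)^(2*k+1) = -∑' k, a (2*k+1) := by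
    rw [ho, tsum_neg]
  rw [h1, h2]
  have hsub : ∑' k, a (2*k) - ∑' k, a (2*k+1) = ∑' k, (a (2*k) - a (2*k+1)) :=
    (Summable.tsum_sub hse hso).symm
  rw [← sub_eq_add_neg, hsub]
  have := Summable.le_tsum (hse.sub hso) 0 (fun j _ => by
    have := ha (2*j); linarith)
  simpa using this

lemma alt_upper (a : ℕ → ℝ) (hs : Summable a) (h0 : ∀ m, 0 ≤ a m)
    (ha : ∀ m, a (m+1) ≤ a m) : ∑' m, a m * (-1:ℝ)^m ≤ a 0 - (a 1 - a 2) := by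
  have hs' : Summable (fun m => a (m+1)) := (summable_nat_add_iff 1).mpr hs
  have hlow := alt_lower (fun m => a (m+1)) hs' (fun m => h0 _) (fun m => ha _)
  rw [Summable.tsum_eq_zero_add (alt_summable a hs h0)]
  have h3 : ∑' m, a (m+1) * (-1:ℝ)^(m+1) = -∑' m, a (m+1) * (-1:ℝ)^m := by
    rw [← tsum_neg]; congr 1; funext m; ring
  simp only [pow_zero, mul_one]
  rw [h3]
  simp only [zero_add, Nat.reduceAdd] at hlow
  linarith

lemma bracket_mono {N x y AA BB : ℝ} (hN : 3 ≤ N) (hx : 2*N ≤ x) (hxy : x ≤ y)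
    (hB : 0 ≤ BB) (hAB : BB ≤ AA) :
    BB*(N-1)/(y+N-1) - BB/(y+1) ≤ AA*(N-1)/(x+N-1) - AA/(x+1) := by
  have hx0 : 0 < x := by linarith
  have hx1 : 0 < x + 1 := by linarith
  have hxN : 0 < x + N - 1 := by linarith
  have hy1 : 0 < y + 1 := by linarith
  have hyN : 0 < y + N - 1 := by linarith
  have hphiy : BB*(N-1)/(y+N-1) - BB/(y+1) = BB * ((N-2)*y/((y+N-1)*(y+1))) := by
    field_simp; ring
  have hphix : AA*(N-1)/(x+N-1) - AA/(x+1) = AA * ((N-2)*x/((x+N-1)*(x+1))) := by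
    field_simp; ring
  rw [hphix, hphiy]
  have hxy2 : 0 ≤ x*y - (N-1) := by nlinarith
  have key : (N-2)*y/((y+N-1)*(y+1)) ≤ (N-2)*x/((x+N-1)*(x+1)) := by
    rw [div_le_div_iff₀ (by positivity) (by positivity)]
    nlinarith [mul_nonneg (mul_nonneg (by linarith : (0:ℝ) ≤ N-2)
      (by linarith : (0:ℝ) ≤ y - x)) hxy2]
  have hphiy0 : 0 ≤ (N-2)*y/((y+N-1)*(y+1)) :=
    div_nonneg (mul_nonneg (by linarith) (by linarith)) (by positivity)
  exact mul_le_mul hAB key hphiy0 (le_trans hB hAB)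

section
variable {n : ℕ} (hn : 3 ≤ n)
include hn

lemma hN3 : (3:ℝ) ≤ (n:ℝ) := by exact_mod_cast hn

lemma cden_pos (m : ℕ) : (0:ℝ) < 2 * m * n + 1 := by positivity

lemma dden_pos (m : ℕ) : (0:ℝ) < (n:ℝ) * (2 * m + 1) - 1 := by
  have := hN3 hn
  nlinarith [Nat.cast_nonneg (α := ℝ) m]

lemma c_pos (m : ℕ) : 0 < c n m := div_pos (A_pos m) (cden_pos hn m)

lemma d_pos (m : ℕ) : 0 < d n m := by
  have := hN3 hn
  exact div_pos (mul_pos (A_pos m) (by linarith)) (dden_pos hn m)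

lemma c_le_d (m : ℕ) : c n m ≤ d n m := by
  have hNr := hN3 hn
  have hm : (0:ℝ) ≤ m := Nat.cast_nonneg m
  rw [c, d, div_le_div_iff₀ (cden_pos hn m) (dden_pos hn m)]
  nlinarith [A_pos m, mul_nonneg (mul_nonneg hm (by linarith : (0:ℝ) ≤ (n:ℝ) - 2)) (A_pos m).le]

lemma c_anti (m : ℕ) : c n (m+1) ≤ c n m := by
  have hNr := hN3 hn
  have hm : (0:ℝ) ≤ m := Nat.cast_nonneg m
  rw [c, c]
  apply div_le_div₀ (A_pos m).le (A_succ_lt m).le (cden_pos hn m)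
  push_cast
  nlinarith

lemma c_anti_strict (m : ℕ) : c n (m+1) < c n m := by
  have hNr := hN3 hn
  have hm : (0:ℝ) ≤ m := Nat.cast_nonneg m
  rw [c, c, div_lt_div_iff₀ (cden_pos hn (m+1)) (cden_pos hn m)]
  push_cast
  nlinarith [mul_nonneg (by linarith [A_succ_lt m] : (0:ℝ) ≤ A m - A (m+1))
      (by nlinarith : (0:ℝ) ≤ 2*(m:ℝ)*(n:ℝ)+1),
    mul_pos (A_pos m) (show (0:ℝ) < 2*(n:ℝ) by linarith)]

lemma d_anti (m : ℕ) : d n (m+1) ≤ d n m := by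
  have hNr := hN3 hn
  have hm : (0:ℝ) ≤ m := Nat.cast_nonneg m
  rw [d, d]
  apply div_le_div₀ (mul_nonneg (A_pos m).le (by linarith))
    (mul_le_mul_of_nonneg_right (A_succ_lt m).le (by linarith)) (dden_pos hn m)
  push_cast
  nlinarith

lemma d_le_tele (m : ℕ) : d n (m+1) ≤ A m - A (m+1) := by
  have hNr := hN3 hn
  have hm : (0:ℝ) ≤ m := Nat.cast_nonneg m
  rw [A_tele, d, div_le_div_iff₀ (dden_pos hn (m+1)) (by positivity)]
  push_cast
  nlinarith [mul_le_mul_of_nonneg_right (A_succ_lt m).le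
      (by nlinarith : (0:ℝ) ≤ ((n:ℝ)-1)*(2*(m:ℝ)+2)),
    mul_nonneg (A_pos m).le (by linarith : (0:ℝ) ≤ (n:ℝ) + 2*(m:ℝ) + 1)]

omit hn in
lemma d_as (j : ℕ) : d n j = A j * ((n:ℝ)-1) / ((2*(j:ℝ)*(n:ℝ)) + (n:ℝ) - 1) := by
  rw [d]; ring_nf

omit hn in
lemma c_as (j : ℕ) : c n j = A j / ((2*(j:ℝ)*(n:ℝ)) + 1) := by
  rw [c]

lemma dc_sub_anti (j : ℕ) (hj : 1 ≤ j) :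
    d n (j+1) - c n (j+1) ≤ d n j - c n j := by
  have hNr := hN3 hn
  have hj' : (1:ℝ) ≤ (j:ℝ) := by exact_mod_cast hj
  have h := bracket_mono (N := (n:ℝ)) (x := 2*(j:ℝ)*(n:ℝ)) (y := 2*((j:ℝ)+1)*(n:ℝ))
    (AA := A j) (BB := A (j+1)) hNr (by nlinarith) (by nlinarith)
    (A_pos (j+1)).le (A_succ_lt j).le
  rw [d_as, d_as, c_as, c_as]
  push_cast
  calc A (j+1) * ((n:ℝ)-1) / (2*((j:ℝ)+1)*(n:ℝ) + (n:ℝ) - 1) - A (j+1) / (2*((j:ℝ)+1)*(n:ℝ) + 1)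
      = A (j+1)*((n:ℝ)-1)/((2*((j:ℝ)+1)*(n:ℝ))+(n:ℝ)-1) - A (j+1)/((2*((j:ℝ)+1)*(n:ℝ))+1) := by
        ring_nf
    _ ≤ A j*((n:ℝ)-1)/((2*(j:ℝ)*(n:ℝ))+(n:ℝ)-1) - A j/((2*(j:ℝ)*(n:ℝ))+1) := h
    _ = A j * ((n:ℝ)-1) / (2*(j:ℝ)*(n:ℝ) + (n:ℝ) - 1) - A j / (2*(j:ℝ)*(n:ℝ) + 1) := by ring_nf

/-! ### Concrete values -/

lemma d_zero : d n 0 = 1 := by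
  have hNr := hN3 hn
  rw [d_as, A_zero]
  rw [show (2*((0:ℕ):ℝ)*(n:ℝ) + (n:ℝ) - 1) = (n:ℝ)-1 by push_cast; ring, one_mul,
    div_self (by linarith : (n:ℝ)-1 ≠ 0)]

omit hn in
lemma c_zero : c n 0 = 1 := by
  rw [c_as, A_zero]
  push_cast
  norm_num

lemma d_one_lt : d n 1 < 1/6 := by
  have hNr := hN3 hn
  rw [d_as, A_one]
  rw [div_lt_iff₀ (by push_cast; linarith : (0:ℝ) < 2*((1:ℕ):ℝ)*(n:ℝ) + (n:ℝ) - 1)]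
  push_cast
  nlinarith

lemma c_one_lt_d_one : c n 1 < d n 1 := by
  have hNr := hN3 hn
  rw [d_as, c_as, A_one,
    div_lt_div_iff₀ (by push_cast; linarith : (0:ℝ) < 2*((1:ℕ):ℝ)*(n:ℝ) + 1)
      (by push_cast; linarith : (0:ℝ) < 2*((1:ℕ):ℝ)*(n:ℝ) + (n:ℝ) - 1)]
  push_cast
  nlinarith

lemma dc_one : d n 1 - c n 1 = (n:ℝ)*((n:ℝ)-2)/((3*(n:ℝ)-1)*(2*(n:ℝ)+1)) := by
  have hNr := hN3 hn
  rw [d_as, c_as, A_one]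
  have h1 : (2*((1:ℕ):ℝ)*(n:ℝ) + (n:ℝ) - 1) ≠ 0 := by push_cast; nlinarith
  have h2 : (2*((1:ℕ):ℝ)*(n:ℝ) + 1) ≠ 0 := by push_cast; nlinarith
  have h3 : ((3*(n:ℝ)-1)*(2*(n:ℝ)+1)) ≠ 0 := by nlinarith
  have h6 : ((2*((1:ℕ):ℝ)*(n:ℝ) + (n:ℝ) - 1)*(2*((1:ℕ):ℝ)*(n:ℝ) + 1)) ≠ 0 :=
    mul_ne_zero h1 h2
  rw [div_sub_div _ _ h1 h2, div_eq_div_iff h6 h3]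
  push_cast
  ring

lemma dc_two : d n 2 - c n 2 = (3/2)*((n:ℝ)*((n:ℝ)-2))/((5*(n:ℝ)-1)*(4*(n:ℝ)+1)) := by
  have hNr := hN3 hn
  rw [d_as, c_as, A_two]
  have h1 : (2*((2:ℕ):ℝ)*(n:ℝ) + (n:ℝ) - 1) ≠ 0 := by push_cast; nlinarith
  have h2 : (2*((2:ℕ):ℝ)*(n:ℝ) + 1) ≠ 0 := by push_cast; nlinarith
  have h3 : ((5*(n:ℝ)-1)*(4*(n:ℝ)+1)) ≠ 0 := by nlinarith
  have h6 : ((2*((2:ℕ):ℝ)*(n:ℝ) + (n:ℝ) - 1)*(2*((2:ℕ):ℝ)*(n:ℝ) + 1)) ≠ 0 :=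
    mul_ne_zero h1 h2
  rw [div_sub_div _ _ h1 h2, div_eq_div_iff h6 h3]
  push_cast
  ring

lemma dc_two_lt_one : d n 2 - c n 2 < d n 1 - c n 1 := by
  have hNr := hN3 hn
  rw [dc_one hn, dc_two hn,
    div_lt_div_iff₀ (by nlinarith : (0:ℝ) < (5*(n:ℝ)-1)*(4*(n:ℝ)+1))
      (by nlinarith : (0:ℝ) < (3*(n:ℝ)-1)*(2*(n:ℝ)+1))]
  nlinarith [mul_pos (mul_pos (show (0:ℝ) < (n:ℝ) by linarith)
      (show (0:ℝ) < (n:ℝ)-2 by linarith))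
    (show (0:ℝ) < 11*(n:ℝ)^2 - (n:ℝ)/2 + 1/2 by nlinarith)]

/-! ### Summability -/

lemma summable_d : Summable (d n) := by
  have h1 : Summable (fun m => d n (m+1)) :=
    Summable.of_nonneg_of_le (fun m => (d_pos hn _).le) (d_le_tele hn) tele_summable
  exact (summable_nat_add_iff 1).mp h1

lemma summable_c : Summable (c n) :=
  Summable.of_nonneg_of_le (fun m => (c_pos hn m).le) (c_le_d hn) (summable_d hn)

end

theorem stmt_3 (n : ℕ) (hn : 3 ≤ n) :
    5 / 6 < (∑' m : ℕ, d n m * (-1 : ℝ) ^ m) ∧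
    (∑' m : ℕ, d n m * (-1 : ℝ) ^ m) < (∑' m : ℕ, c n m * (-1 : ℝ) ^ m) ∧
    (∑' m : ℕ, c n m * (-1 : ℝ) ^ m) < 1 ∧
    (1 : ℝ) < (∑' m : ℕ, c n m) ∧
    (∑' m : ℕ, c n m) < (∑' m : ℕ, d n m) ∧
    (∑' m : ℕ, d n m) < 2 := by
  have hNr := hN3 hn
  have hsd := summable_d hn
  have hsc := summable_c hn
  have hd0 := d_zero hn
  have hc0 := c_zero (n := n)
  -- part 1 : 5/6 < alternating d sum
  have P1 : 5 / 6 < (∑' m : ℕ, d n m * (-1 : ℝ) ^ m) := by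
    have hlow := alt_lower (d n) hsd (fun m => (d_pos hn m).le) (d_anti hn)
    rw [hd0] at hlow
    linarith [d_one_lt hn]
  -- part 3 : alternating c sum < 1
  have P3 : (∑' m : ℕ, c n m * (-1 : ℝ) ^ m) < 1 := by
    have hup := alt_upper (c n) hsc (fun m => (c_pos hn m).le) (c_anti hn)
    rw [hc0] at hup
    linarith [c_anti_strict hn 1]
  -- part 2 : alternating d sum < alternating c sum
  have P2 : (∑' m : ℕ, d n m * (-1 : ℝ) ^ m) < (∑' m : ℕ, c n m * (-1 : ℝ) ^ m) := by
    have haltc := alt_summable (c n) hsc (fun m => (c_pos hn m).le)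
    have haltd := alt_summable (d n) hsd (fun m => (d_pos hn m).le)
    have hsub : (∑' m : ℕ, c n m * (-1:ℝ)^m) - (∑' m : ℕ, d n m * (-1:ℝ)^m)
        = ∑' m : ℕ, (c n m - d n m) * (-1:ℝ)^m := by
      rw [← Summable.tsum_sub haltc haltd]
      congr 1; funext m; ring
    have hsum0 : Summable (fun m => (c n m - d n m) * (-1:ℝ)^m) := by
      have := haltc.sub haltd
      refine this.congr (fun m => ?_)
      ring
    have hshift : (∑' m : ℕ, (c n m - d n m) * (-1:ℝ)^m)
        = ∑' m : ℕ, (d n (m+1) - c n (m+1)) * (-1:ℝ)^m := by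
      rw [Summable.tsum_eq_zero_add hsum0]
      have h0 : (c n 0 - d n 0) * (-1:ℝ)^0 = 0 := by rw [hd0, hc0]; ring
      rw [h0, zero_add]
      congr 1; funext m; ring
    have hsd' : Summable (fun m => d n (m+1) - c n (m+1)) := by
      exact ((summable_nat_add_iff 1).mpr hsd).sub ((summable_nat_add_iff 1).mpr hsc)
    have hlow := alt_lower (fun m => d n (m+1) - c n (m+1)) hsd'
      (fun m => by
        show 0 ≤ d n (m+1) - c n (m+1)
        linarith [c_le_d hn (m+1)])
      (fun m => dc_sub_anti hn (m+1) (by omega))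
    have hgap := dc_two_lt_one hn
    have hc1d1 := c_one_lt_d_one hn
    have : 0 < ∑' m : ℕ, (d n (m+1) - c n (m+1)) * (-1:ℝ)^m := by linarith
    rw [← hshift, ← hsub] at this
    linarith
  -- part 4 : 1 < sum c
  have P4 : (1 : ℝ) < (∑' m : ℕ, c n m) := by
    have h := hsc.sum_le_tsum (Finset.range 2) (fun i _ => (c_pos hn i).le)
    rw [Finset.sum_range_succ, Finset.sum_range_one, hc0] at h
    linarith [c_pos hn 1]
  -- part 5 : sum c < sum d
  have P5 : (∑' m : ℕ, c n m) < (∑' m : ℕ, d n m) :=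
    Summable.tsum_lt_tsum_of_nonneg (fun b => (c_pos hn b).le) (c_le_d hn) (c_one_lt_d_one hn) hsd
  -- part 6 : sum d < 2
  have P6 : (∑' m : ℕ, d n m) < 2 := by
    rw [Summable.tsum_eq_zero_add hsd, hd0]
    have hi : d n (0+1) < A 0 - A (0+1) := by
      rw [A_zero, A_one]
      linarith [d_one_lt hn]
    have h2 : ∑' m : ℕ, d n (m+1) < ∑' m : ℕ, (A m - A (m+1)) :=
      Summable.tsum_lt_tsum_of_nonneg (fun b => (d_pos hn _).le) (d_le_tele hn) hi tele_summable
    linarith [tele_tsum_le]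
  exact ⟨P1, P2, P3, P4, P5, P6⟩
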